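/- For every ε ∈ (0,1/2), the function u_ε is supported in [ε,3/4] and satisfies ‖u_ε‖_{∼,1/2,(ε,3/4)}² ≥ log(log(1/ε)) + 4(log 2)^{1/2}/(log(1/ε))^{1/2} − (log 2)/log(1/ε) − log(log 2) − 3. In particular, ‖u_ε‖_{∼,1/2,(ε,3/4)} → ∞ as ε → 0⁺. -/

import Mathlib

open MeasureTheory Metric Set ENNReal Filter

open Topology

/-- The squared half-order weighted Sobolev norm on an open set `O ⊆ ℝ` (dimension `n = 1`). -/
noncomputable def halfNormSq (O : Set ℝ) (u : ℝ → ℝ) : ℝ≥0∞ :=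
  (∫⁻ x in O, ∫⁻ y in O, ENNReal.ofReal ((u x - u y) ^ 2 / |x - y| ^ 2)) +
    ∫⁻ x in O, ENNReal.ofReal ((u x) ^ 2 / infDist x Oᶜ)

/-- The function `u_ε` from the counterexample of Ainsworth–Guo, adapted:
`u_ε(r) = (−log r)^{−1/2} − (−log ε)^{−1/2}` for `ε ≤ r < 1/2`,
`u_ε(r) = (3−4r)((log 2)^{−1/2} − (−log ε)^{−1/2})` for `1/2 ≤ r < 3/4`, and `0` otherwise. -/
noncomputable def ueps (ε : ℝ) : ℝ → ℝ := fun r =>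
  if ε ≤ r ∧ r < 1 / 2 then
    (-Real.log r) ^ (-(1 / 2) : ℝ) - (-Real.log ε) ^ (-(1 / 2) : ℝ)
  else if 1 / 2 ≤ r ∧ r < 3 / 4 then
    (3 - 4 * r) * ((Real.log 2) ^ (-(1 / 2) : ℝ) - (-Real.log ε) ^ (-(1 / 2) : ℝ))
  else 0

/-- The exact value of the weighted integral `∫_ε^{1/2} ((-log x)^{-1/2} - (-log ε)^{-1/2})²/x dx`,
computed via the fundamental theorem of calculus with the substitution `t = -log x`. -/
lemma ftc_key {ε : ℝ} (hε0 : 0 < ε) (hε : ε < 1/2) :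
    ∫ x in Ioo ε (1/2), ((-Real.log x) ^ (-(1/2):ℝ) - (-Real.log ε) ^ (-(1/2):ℝ))^2 / x
      = Real.log (-Real.log ε) + 4 * Real.sqrt (Real.log 2) / Real.sqrt (-Real.log ε)
        - Real.log 2 / (-Real.log ε) - Real.log (Real.log 2) - 3 := by
  set L : ℝ := -Real.log ε with hLdef
  have hlog2 : 0 < Real.log 2 := Real.log_pos (by norm_num)
  have hL : Real.log 2 ≤ L := by
    rw [hLdef, ← Real.log_inv]
    exact Real.log_le_log (by norm_num) ((le_inv_comm₀ two_pos hε0).mpr (by linarith))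
  have hL0 : 0 < L := lt_of_lt_of_le hlog2 hL
  have hmem : ∀ x ∈ Icc ε (1/2), 0 < x ∧ Real.log 2 ≤ -Real.log x := by
    intro x hx
    refine ⟨lt_of_lt_of_le hε0 hx.1, ?_⟩
    rw [← Real.log_inv]
    exact Real.log_le_log (by norm_num) ((le_inv_comm₀ two_pos (lt_of_lt_of_le hε0 hx.1)).mpr
      (by linarith [hx.2]))
  set c : ℝ := L ^ (-(1/2):ℝ) with hcdef
  set F : ℝ → ℝ := fun x => -Real.log (-Real.log x) + 4 * c * Real.sqrt (-Real.log x)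
      - (-Real.log x) / L with hFdef
  set g : ℝ → ℝ := fun x => ((-Real.log x) ^ (-(1/2):ℝ) - c)^2 / x with hgdef
  have hrpow_half : ∀ t : ℝ, 0 < t → t ^ (-(1/2):ℝ) = (Real.sqrt t)⁻¹ := by
    intro t ht
    rw [Real.rpow_neg ht.le, Real.sqrt_eq_rpow]
  have hderiv : ∀ x ∈ Icc ε (1/2), HasDerivAt F (g x) x := by
    intro x hx
    obtain ⟨hx0, hlx⟩ := hmem x hx
    have hlx0 : (0:ℝ) < -Real.log x := lt_of_lt_of_le hlog2 hlx
    have hneg : HasDerivAt (fun y : ℝ => -Real.log y) (-x⁻¹) x :=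
      (Real.hasDerivAt_log hx0.ne').neg
    have h1 : HasDerivAt (fun y : ℝ => Real.log (-Real.log y)) ((-Real.log x)⁻¹ * -x⁻¹) x :=
      by have := (Real.hasDerivAt_log hlx0.ne').comp x hneg; exact this
    have h2 : HasDerivAt (fun y : ℝ => Real.sqrt (-Real.log y))
        (1 / (2 * Real.sqrt (-Real.log x)) * -x⁻¹) x :=
      (Real.hasDerivAt_sqrt hlx0.ne').comp x hneg
    have h3 : HasDerivAt (fun y : ℝ => (-Real.log y) / L) (-x⁻¹ / L) x := hneg.div_const L
    have h := (h1.neg.add ((h2.const_mul (4 * c)))).sub h3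
    convert h using 1
    case e'_4 => rfl
    case e'_5 => rfl
    case e'_8 => rfl
    rw [hgdef, hcdef]
    obtain ⟨s, hs0, hseq⟩ : ∃ s:ℝ, 0 < s ∧ -Real.log x = s^2 :=
      ⟨_, Real.sqrt_pos.mpr hlx0, (Real.sq_sqrt hlx0.le).symm⟩
    obtain ⟨sL, hsL0, hsLeq⟩ : ∃ s:ℝ, 0 < s ∧ L = s^2 :=
      ⟨_, Real.sqrt_pos.mpr hL0, (Real.sq_sqrt hL0.le).symm⟩
    simp only [hseq, hsLeq, hrpow_half _ (by positivity : (0:ℝ) < s^2),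
      hrpow_half _ (by positivity : (0:ℝ) < sL^2),
      Real.sqrt_sq hs0.le, Real.sqrt_sq hsL0.le]
    field_simp
    ring
  have huIcc : uIcc ε (1/2 : ℝ) = Icc ε (1/2) := uIcc_of_le (by linarith)
  have hcont : ContinuousOn g (Icc ε (1/2)) := by
    apply ContinuousOn.div
    · apply ContinuousOn.pow
      apply ContinuousOn.sub _ continuousOn_const
      apply ContinuousOn.rpow_const
      · exact (Real.continuousOn_log.mono (fun x hx => by
          simp only [mem_compl_iff, mem_singleton_iff]
          exact (hmem x hx).1.ne')).neg
      · intro x hx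
        exact Or.inl (lt_of_lt_of_le hlog2 (hmem x hx).2).ne'
    · exact continuousOn_id
    · exact fun x hx => (hmem x hx).1.ne'
  have hint : IntervalIntegrable g volume ε (1/2) := by
    rw [intervalIntegrable_iff_integrableOn_Icc_of_le (by linarith)]
    exact hcont.integrableOn_Icc
  have hFTC : ∫ x in ε..(1/2), g x = F (1/2) - F ε := by
    apply intervalIntegral.integral_eq_sub_of_hasDerivAt
    · rw [huIcc]; exact hderiv
    · exact hint
  have hIoo : ∫ x in Ioo ε (1/2), g x = F (1/2) - F ε := by
    rw [← MeasureTheory.integral_Ioc_eq_integral_Ioo,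
      ← intervalIntegral.integral_of_le (by linarith : ε ≤ 1/2)]
    exact hFTC
  rw [hIoo]
  have hlhalf : -Real.log (1/2 : ℝ) = Real.log 2 := by
    rw [one_div, Real.log_inv]; ring
  have hcL : c * Real.sqrt L = 1 := by
    rw [hcdef, hrpow_half _ hL0, inv_mul_cancel₀ (Real.sqrt_pos.mpr hL0).ne']
  have hF2 : F (1/2) = -Real.log (Real.log 2)
      + 4 * (Real.sqrt (Real.log 2) / Real.sqrt L) - Real.log 2 / L := by
    rw [hFdef]
    simp only [hlhalf]
    rw [hcdef, hrpow_half _ hL0]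
    ring
  have hFε : F ε = -Real.log L + 3 := by
    rw [hFdef]
    simp only [← hLdef]
    rw [div_self hL0.ne', mul_assoc, hcL]
    ring
  rw [hF2, hFε]
  ring

/-- Integrability of the integrand appearing in `ftc_key`. -/
lemma g_integrableOn {ε : ℝ} (hε0 : 0 < ε) (hε : ε < 1/2) :
    IntegrableOn (fun x => ((-Real.log x) ^ (-(1/2):ℝ) - (-Real.log ε) ^ (-(1/2):ℝ))^2 / x)
      (Ioo ε (1/2)) volume := by
  have hlog2 : 0 < Real.log 2 := Real.log_pos (by norm_num)
  have hmem : ∀ x ∈ Icc ε (1/2), 0 < x ∧ Real.log 2 ≤ -Real.log x := by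
    intro x hx
    refine ⟨lt_of_lt_of_le hε0 hx.1, ?_⟩
    rw [← Real.log_inv]
    exact Real.log_le_log (by norm_num) ((le_inv_comm₀ two_pos (lt_of_lt_of_le hε0 hx.1)).mpr
      (by linarith [hx.2]))
  have hcont : ContinuousOn (fun x => ((-Real.log x) ^ (-(1/2):ℝ)
      - (-Real.log ε) ^ (-(1/2):ℝ))^2 / x) (Icc ε (1/2)) := by
    apply ContinuousOn.div
    · apply ContinuousOn.pow
      apply ContinuousOn.sub _ continuousOn_const
      apply ContinuousOn.rpow_const
      · exact (Real.continuousOn_log.mono (fun x hx => by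
          simp only [mem_compl_iff, mem_singleton_iff]
          exact (hmem x hx).1.ne')).neg
      · intro x hx
        exact Or.inl (lt_of_lt_of_le hlog2 (hmem x hx).2).ne'
    · exact continuousOn_id
    · exact fun x hx => (hmem x hx).1.ne'
  exact (hcont.integrableOn_Icc).mono_set Ioo_subset_Icc_self

/-- The main lower bound for the squared half-norm of `ueps ε`. -/
lemma halfNormSq_lower_bound {ε : ℝ} (hε0 : 0 < ε) (hε : ε < 1/2) :
    ENNReal.ofReal (Real.log (Real.log (1 / ε)) +
        4 * Real.sqrt (Real.log 2) / Real.sqrt (Real.log (1 / ε)) -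
        Real.log 2 / Real.log (1 / ε) - Real.log (Real.log 2) - 3) ≤
      halfNormSq (Ioo ε (3 / 4)) (ueps ε) := by
  have hloginv : Real.log (1 / ε) = -Real.log ε := by rw [one_div, Real.log_inv]
  set g : ℝ → ℝ := fun x =>
    ((-Real.log x) ^ (-(1/2):ℝ) - (-Real.log ε) ^ (-(1/2):ℝ))^2 / x with hgdef
  have step1 : ENNReal.ofReal (Real.log (Real.log (1 / ε)) +
        4 * Real.sqrt (Real.log 2) / Real.sqrt (Real.log (1 / ε)) -
        Real.log 2 / Real.log (1 / ε) - Real.log (Real.log 2) - 3)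
      ≤ ∫⁻ x in Ioo ε (1/2), ENNReal.ofReal (g x) := by
    rw [hloginv, ← ftc_key hε0 hε]
    rw [ofReal_integral_eq_lintegral_ofReal (g_integrableOn hε0 hε) ?_]
    filter_upwards [ae_restrict_mem measurableSet_Ioo] with x hx
    exact div_nonneg (sq_nonneg _) (le_of_lt (lt_of_lt_of_le hε0 hx.1.le))
  have step2 : (∫⁻ x in Ioo ε (1/2), ENNReal.ofReal (g x))
      ≤ ∫⁻ x in Ioo ε (1/2),
          ENNReal.ofReal ((ueps ε x) ^ 2 / infDist x (Ioo ε (3/4))ᶜ) := by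
    apply lintegral_mono_ae
    filter_upwards [ae_restrict_mem measurableSet_Ioo] with x hx
    have hx0 : 0 < x := lt_of_lt_of_le hε0 hx.1.le
    have hxmem : x ∈ Ioo ε (3/4) := ⟨hx.1, by linarith [hx.2]⟩
    have hεc : ε ∈ (Ioo ε (3/4))ᶜ := by simp [lt_irrefl]
    have hd_pos : 0 < infDist x (Ioo ε (3/4))ᶜ := by
      rw [← (isOpen_Ioo.isClosed_compl.notMem_iff_infDist_pos ⟨ε, hεc⟩)]
      simpa using hxmem
    have hd_le : infDist x (Ioo ε (3/4))ᶜ ≤ x := by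
      calc infDist x (Ioo ε (3/4))ᶜ ≤ dist x ε := infDist_le_dist_of_mem hεc
        _ = x - ε := by rw [Real.dist_eq, abs_of_nonneg (by linarith [hx.1])]
        _ ≤ x := by linarith
    have hueq : ueps ε x = (-Real.log x) ^ (-(1/2):ℝ) - (-Real.log ε) ^ (-(1/2):ℝ) := by
      rw [ueps, if_pos ⟨hx.1.le, hx.2⟩]
    apply ENNReal.ofReal_le_ofReal
    rw [hueq, hgdef]
    exact div_le_div_of_nonneg_left (sq_nonneg _) hd_pos hd_le
  have step3 : (∫⁻ x in Ioo ε (1/2),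
        ENNReal.ofReal ((ueps ε x) ^ 2 / infDist x (Ioo ε (3/4))ᶜ))
      ≤ ∫⁻ x in Ioo ε (3/4),
        ENNReal.ofReal ((ueps ε x) ^ 2 / infDist x (Ioo ε (3/4))ᶜ) :=
    lintegral_mono_set (Ioo_subset_Ioo_right (by norm_num))
  calc _ ≤ _ := step1
    _ ≤ _ := step2
    _ ≤ _ := step3
    _ ≤ halfNormSq (Ioo ε (3/4)) (ueps ε) := le_add_self

/-- The lower-bound expression tends to `+∞` as `ε → 0⁺`. -/
lemma expr_tendsto_atTop :
    Tendsto (fun ε : ℝ => Real.log (Real.log (1 / ε)) +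
        4 * Real.sqrt (Real.log 2) / Real.sqrt (Real.log (1 / ε)) -
        Real.log 2 / Real.log (1 / ε) - Real.log (Real.log 2) - 3)
      (nhdsWithin 0 (Ioi 0)) atTop := by
  have h1 : Tendsto (fun ε : ℝ => 1 / ε) (𝓝[>] 0) atTop := by
    simpa [one_div] using tendsto_inv_nhdsGT_zero (𝕜 := ℝ)
  have hlogL : Tendsto (fun ε : ℝ => Real.log (1 / ε)) (𝓝[>] 0) atTop :=
    Real.tendsto_log_atTop.comp h1
  have hA : Tendsto (fun ε : ℝ => Real.log (Real.log (1 / ε))) (𝓝[>] 0) atTop :=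
    Real.tendsto_log_atTop.comp hlogL
  have hsqrt : Tendsto Real.sqrt atTop atTop :=
    (tendsto_rpow_atTop (by norm_num : (0:ℝ) < 1/2)).congr
      fun x => (Real.sqrt_eq_rpow x).symm
  have hB : Tendsto (fun ε : ℝ => 4 * Real.sqrt (Real.log 2) / Real.sqrt (Real.log (1 / ε)))
      (𝓝[>] 0) (𝓝 0) :=
    Tendsto.div_atTop tendsto_const_nhds (hsqrt.comp hlogL)
  have hC : Tendsto (fun ε : ℝ => Real.log 2 / Real.log (1 / ε)) (𝓝[>] 0) (𝓝 0) :=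
    Tendsto.div_atTop tendsto_const_nhds hlogL
  have hrest : Tendsto (fun ε : ℝ =>
      4 * Real.sqrt (Real.log 2) / Real.sqrt (Real.log (1 / ε))
        - Real.log 2 / Real.log (1 / ε) - Real.log (Real.log 2) - 3)
      (𝓝[>] 0) (𝓝 (0 - 0 - Real.log (Real.log 2) - 3)) :=
    ((hB.sub hC).sub tendsto_const_nhds).sub tendsto_const_nhds
  have := hA.atTop_add hrest
  refine this.congr fun ε => by ring

/-- `u_ε` is supported in `[ε, 3/4]`, its squared half-norm on `(ε, 3/4)` is bounded below by
`log(log(1/ε)) + 4√(log 2)/√(log(1/ε)) − log 2/log(1/ε) − log(log 2) − 3`, and in particular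
`‖u_ε‖_{∼,1/2,(ε,3/4)} → ∞` as `ε → 0⁺`. -/
theorem halfNormSq_ueps_blows_up :
    (∀ ε ∈ Ioo (0 : ℝ) (1 / 2), ∀ r, r ∉ Icc ε (3 / 4) → ueps ε r = 0) ∧
    (∀ ε ∈ Ioo (0 : ℝ) (1 / 2),
      ENNReal.ofReal (Real.log (Real.log (1 / ε)) +
          4 * Real.sqrt (Real.log 2) / Real.sqrt (Real.log (1 / ε)) -
          Real.log 2 / Real.log (1 / ε) - Real.log (Real.log 2) - 3) ≤
        halfNormSq (Ioo ε (3 / 4)) (ueps ε)) ∧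
    Tendsto (fun ε => halfNormSq (Ioo ε (3 / 4)) (ueps ε)) (nhdsWithin 0 (Ioi 0)) (nhds ⊤) := by
  refine ⟨?_, ?_, ?_⟩
  · intro ε hε r hr
    simp only [mem_Icc, not_and_or, not_le] at hr
    obtain ⟨hε0, hε2⟩ := hε
    rw [ueps]
    rcases hr with h | h
    · rw [if_neg (fun hc => absurd hc.1 (not_le.mpr h)),
        if_neg (fun hc => by linarith [hc.1])]
    · rw [if_neg (fun hc => by linarith [hc.2]), if_neg (fun hc => by linarith [hc.2])]
  · intro ε hε
    exact halfNormSq_lower_bound hε.1 hε.2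
  · apply tendsto_nhds_top_mono (ENNReal.tendsto_ofReal_atTop.comp expr_tendsto_atTop)
    filter_upwards [Ioo_mem_nhdsGT_of_mem
      (show (0:ℝ) ∈ Ico (0:ℝ) (1/2) by simp)] with ε hε
    exact halfNormSq_lower_bound hε.1 hε.2
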